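/- The graded module A_s^+ (the symmetric top level of A(1)⊗A(1)) is a cyclic W(1)-module generated by the class of x_1x_2: the submodule generated by v_{2,s} = x_1x_2 equals all of A_s^+, which has dimension p(p−1)/2. -/

import Mathlib

set_option synthInstance.maxHeartbeats 1000000
set_option maxHeartbeats 1000000

/-- The action of the Witt-algebra basis element `e_j = x^{j+1}∂` on
`A(1) = k[X]/(X^p)`, in coordinates w.r.t. the monomial basis `x^0, …, x^{p-1}`:
`e_j · x^a = a·x^{a+j}` (terms with exponent out of range `[0, p-1]` vanish). -/
noncomputable def wittOp1 (p : ℕ) (k : Type) [Field k] (j : ℤ) :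
    (Fin p → k) →ₗ[k] (Fin p → k) :=
  Matrix.toLin' (Matrix.of fun m r : Fin p =>
    if (r : ℤ) = (m : ℤ) - j then (((m : ℤ) - j : ℤ) : k) else 0)

/-- The action of the Witt-algebra basis element `e_j` on
`A_{(2)} = k[X₁,X₂]/(X₁^p, X₂^p)`, in coordinates w.r.t. the monomial basis
`x₁^a x₂^b`: `e_j · f = x₁^{j+1} ∂f/∂x₁ + x₂^{j+1} ∂f/∂x₂`, i.e.
`e_j · (x₁^a x₂^b) = a·x₁^{a+j}x₂^b + b·x₁^a x₂^{b+j}` (out-of-range terms vanish). -/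
noncomputable def wittOp2 (p : ℕ) (k : Type) [Field k] (j : ℤ) :
    (Fin p × Fin p → k) →ₗ[k] (Fin p × Fin p → k) :=
  Matrix.toLin' (Matrix.of fun q r : Fin p × Fin p =>
    (if (r.1 : ℤ) = (q.1 : ℤ) - j ∧ r.2 = q.2 then (((q.1 : ℤ) - j : ℤ) : k) else 0) +
    (if r.1 = q.1 ∧ (r.2 : ℤ) = (q.2 : ℤ) - j then (((q.2 : ℤ) - j : ℤ) : k) else 0))

/-- The degree-`i` graded component `A_i` of `A_{(2)}`: the span of the monomials
`x₁^a x₂^b` with `a + b = i`. -/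
def degComp (p : ℕ) (k : Type) [Field k] (i : ℕ) : Submodule k (Fin p × Fin p → k) where
  carrier := {f | ∀ q : Fin p × Fin p, (q.1 : ℕ) + (q.2 : ℕ) ≠ i → f q = 0}
  add_mem' := by intro f g hf hg q hq; simp [hf q hq, hg q hq]
  zero_mem' := by intro q hq; rfl
  smul_mem' := by intro c f hf q hq; simp [hf q hq]

/-- The symmetric part `A_s` of `A_{(2)} = A(1) ⊗ A(1)`: polynomials invariant under
swapping `x₁` and `x₂`. -/
def symmPart (p : ℕ) (k : Type) [Field k] : Submodule k (Fin p × Fin p → k) where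
  carrier := {f | ∀ q : Fin p × Fin p, f (q.2, q.1) = f q}
  add_mem' := by intro f g hf hg q; simp [hf q, hg q]
  zero_mem' := by intro q; rfl
  smul_mem' := by intro c f hf q; simp [hf q]

/-- The antisymmetric part `A_a` of `A_{(2)} = A(1) ⊗ A(1)`: polynomials negated by
swapping `x₁` and `x₂`. -/
def antisymmPart (p : ℕ) (k : Type) [Field k] : Submodule k (Fin p × Fin p → k) where
  carrier := {f | ∀ q : Fin p × Fin p, f (q.2, q.1) = - f q}
  add_mem' := by intro f g hf hg q; simp only [Set.mem_setOf_eq] at *;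
                 simp [hf q, hg q]; ring
  zero_mem' := by intro q; simp
  smul_mem' := by intro c f hf q; simp only [Set.mem_setOf_eq] at *; simp [hf q]

/-- The monomial `x₁^a x₂^b` of `A_{(2)}` (for `a, b ≤ p-1`), as a coordinate
function. -/
def mono (p : ℕ) (k : Type) [Field k] (a b : ℕ) : Fin p × Fin p → k :=
  fun q => if (q.1 : ℕ) = a ∧ (q.2 : ℕ) = b then 1 else 0

/-- The submodule `A_s' = span{x₁^i + x₂^i : 0 ≤ i ≤ p-1}` of `A_{(2)}`. -/
noncomputable def symmPrime (p : ℕ) (k : Type) [Field k] : Submodule k (Fin p × Fin p → k) :=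
  Submodule.span k (Set.range fun i : Fin p => mono p k i 0 + mono p k 0 i)

/-- The submodule `A_a' = span{x₁^i − x₂^i : 1 ≤ i ≤ p-1}` of `A_{(2)}`. -/
noncomputable def antisymmPrime (p : ℕ) (k : Type) [Field k] : Submodule k (Fin p × Fin p → k) :=
  Submodule.span k {g | ∃ i : Fin p, (i : ℕ) ≠ 0 ∧ g = mono p k i 0 - mono p k 0 i}

def monoZ (p : ℕ) (k : Type) [Field k] (a b : ℤ) : Fin p × Fin p → k :=
  fun q => if (q.1 : ℤ) = a ∧ (q.2 : ℤ) = b then 1 else 0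

noncomputable def SZ (p : ℕ) (k : Type) [Field k] (a b : ℤ) : Fin p × Fin p → k :=
  monoZ p k a b + monoZ p k b a

lemma mono_eq_monoZ (p : ℕ) (k : Type) [Field k] (a b : ℕ) :
    mono p k a b = monoZ p k a b := by
  funext q; simp [mono, monoZ]

lemma monoZ_single (p : ℕ) (k : Type) [Field k] (a b : Fin p) :
    monoZ p k a b = Pi.single (a, b) 1 := by
  funext q
  rcases q with ⟨q1, q2⟩
  simp only [monoZ, Pi.single_apply]
  by_cases h1 : q1 = a <;> by_cases h2 : q2 = b <;>
    simp [h1, h2, Prod.ext_iff, Fin.ext_iff] <;> omega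

lemma monoZ_out (p : ℕ) (k : Type) [Field k] (a b : ℤ) (h : ¬ (0 ≤ a ∧ a < p ∧ 0 ≤ b ∧ b < p)) :
    monoZ p k a b = 0 := by
  funext q
  simp only [monoZ, Pi.zero_apply]
  rw [if_neg]
  rintro ⟨h1, h2⟩
  exact h ⟨h1 ▸ Int.natCast_nonneg _, h1 ▸ by exact_mod_cast q.1.isLt, h2 ▸ Int.natCast_nonneg _,
    h2 ▸ by exact_mod_cast q.2.isLt⟩

lemma SZ_comm (p : ℕ) (k : Type) [Field k] (a b : ℤ) : SZ p k a b = SZ p k b a :=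
  add_comm _ _

lemma SZ_out (p : ℕ) (k : Type) [Field k] (a b : ℤ) (h : ¬ (0 ≤ a ∧ a < p ∧ 0 ≤ b ∧ b < p)) :
    SZ p k a b = 0 := by
  rw [SZ, monoZ_out p k a b h, monoZ_out p k b a (by tauto), add_zero]

lemma wittOp2_monoZ (p : ℕ) (k : Type) [Field k] (j a b : ℤ)
    (ha : 0 ≤ a) (hap : a < p) (hb : 0 ≤ b) (hbp : b < p) :
    wittOp2 p k j (monoZ p k a b) =
      ((a : ℤ) : k) • monoZ p k (a + j) b + ((b : ℤ) : k) • monoZ p k a (b + j) := by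
  lift a to ℕ using ha with a'
  lift b to ℕ using hb with b'
  have hap' : a' < p := by exact_mod_cast hap
  have hbp' : b' < p := by exact_mod_cast hbp
  rw [show ((a' : ℤ)) = ((⟨a', hap'⟩ : Fin p) : ℤ) from rfl,
      show ((b' : ℤ)) = ((⟨b', hbp'⟩ : Fin p) : ℤ) from rfl, monoZ_single]
  rw [wittOp2, Matrix.toLin'_apply, Matrix.mulVec_single_one]
  funext q
  rcases q with ⟨q1, q2⟩
  simp only [Matrix.col_apply, Matrix.of_apply, Pi.add_apply, Pi.smul_apply, monoZ, smul_eq_mul, mul_one]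
  congr 1
  · simp only [Fin.ext_iff]
    split_ifs with h1 h2 h3
    · rw [mul_one]; congr 1; omega
    · exfalso; omega
    · exfalso; omega
    · ring
  · simp only [Fin.ext_iff]
    split_ifs with h1 h2 h3
    · rw [mul_one]; congr 1; omega
    · exfalso; omega
    · exfalso; omega
    · ring

lemma wittOp2_SZ (p : ℕ) (k : Type) [Field k] (j a b : ℤ)
    (ha : 0 ≤ a) (hap : a < p) (hb : 0 ≤ b) (hbp : b < p) :
    wittOp2 p k j (SZ p k a b) =
      ((a : ℤ) : k) • SZ p k (a + j) b + ((b : ℤ) : k) • SZ p k a (b + j) := by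
  rw [SZ, map_add, wittOp2_monoZ p k j a b ha hap hb hbp, wittOp2_monoZ p k j b a hb hbp ha hap,
    SZ, SZ, smul_add, smul_add]
  abel

lemma SZ_apply' (p : ℕ) (k : Type) [Field k] (q r : Fin p × Fin p) :
    SZ p k q.1 q.2 r =
      (if q = r then (1 : k) else 0) + (if q = (r.2, r.1) then (1 : k) else 0) := by
  simp only [SZ, Pi.add_apply, monoZ]
  congr 1
  · by_cases h : q = r
    · subst h; simp
    · rw [if_neg, if_neg h]
      rintro ⟨h1, h2⟩
      apply h
      rcases q with ⟨a, b⟩; rcases r with ⟨c, d⟩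
      simp only [Prod.ext_iff, Fin.ext_iff] at *
      omega
  · by_cases h : q = (r.2, r.1)
    · subst h; simp
    · rw [if_neg, if_neg h]
      rintro ⟨h1, h2⟩
      apply h
      rcases q with ⟨a, b⟩; rcases r with ⟨c, d⟩
      simp only [Prod.ext_iff, Fin.ext_iff] at *
      omega

lemma gen_le (p : ℕ) (k : Type) [Field k] (hp3 : 3 < p) (h2 : (2 : k) ≠ 0)
    (N : Submodule k (Fin p × Fin p → k))
    (h11 : mono p k 1 1 ∈ N) (hpr : symmPrime p k ≤ N)
    (hst : ∀ j : ℤ, -1 ≤ j → j ≤ (p : ℤ) - 2 → ∀ f ∈ N, wittOp2 p k j f ∈ N) :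
    symmPart p k ≤ N := by
  have hp1 : (1 : ℤ) < p := by exact_mod_cast (by omega : 1 < p)
  have stepA : ∀ i : ℕ, i < p → SZ p k i 0 ∈ N := by
    intro i hi
    have hg : mono p k ((⟨i, hi⟩ : Fin p) : ℕ) 0 + mono p k 0 ((⟨i, hi⟩ : Fin p) : ℕ) ∈
        symmPrime p k := Submodule.subset_span ⟨⟨i, hi⟩, rfl⟩
    have he : SZ p k i 0 = mono p k i 0 + mono p k 0 i := by
      rw [SZ, mono_eq_monoZ, mono_eq_monoZ]; norm_num
    rw [he]
    exact hpr hg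
  have h11' : SZ p k 1 1 ∈ N := by
    have he : SZ p k 1 1 = mono p k 1 1 + mono p k 1 1 := by
      rw [SZ, mono_eq_monoZ]; norm_num
    rw [he]; exact N.add_mem h11 h11
  have stepB : ∀ c : ℤ, 0 ≤ c → SZ p k c 1 ∈ N := by
    intro c hc
    by_cases hcp : c < p
    · rcases eq_or_lt_of_le hc with h0 | h1
      · have := stepA 1 (by omega)
        rw [show ((1 : ℕ) : ℤ) = (1 : ℤ) by norm_num] at this
        rw [← h0, SZ_comm]; exact this
      · have hw := hst (c - 1) (by omega) (by omega) _ h11'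
        rw [wittOp2_SZ p k (c - 1) 1 1 (by norm_num) hp1 (by norm_num) hp1] at hw
        rw [show (1 : ℤ) + (c - 1) = c by ring] at hw
        rw [Int.cast_one, one_smul, one_smul, SZ_comm p k 1 c] at hw
        have heq : SZ p k c 1 = (2⁻¹ : k) • (SZ p k c 1 + SZ p k c 1) := by
          rw [← two_smul k, smul_smul, inv_mul_cancel₀ h2, one_smul]
        rw [heq]; exact N.smul_mem _ hw
    · rw [SZ_out p k c 1 (by omega)]; exact N.zero_mem
  have stepC : ∀ a b : ℤ, 1 ≤ a → a < p → 1 ≤ b → b < p → SZ p k a b ∈ N := by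
    intro a b ha hap hb hbp
    have hw := hst (b - 1) (by omega) (by omega) _ (stepB a (by omega))
    rw [wittOp2_SZ p k (b - 1) a 1 (by omega) hap (by norm_num) hp1] at hw
    rw [show (1 : ℤ) + (b - 1) = b by ring, Int.cast_one, one_smul] at hw
    have hmem : ((a : ℤ) : k) • SZ p k (a + (b - 1)) 1 ∈ N :=
      N.smul_mem _ (stepB _ (by omega))
    have heq : SZ p k a b =
        (((a : ℤ) : k) • SZ p k (a + (b - 1)) 1 + SZ p k a b) -
          ((a : ℤ) : k) • SZ p k (a + (b - 1)) 1 := by abel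
    rw [heq]; exact N.sub_mem hw hmem
  have SZmem : ∀ q : Fin p × Fin p, SZ p k q.1 q.2 ∈ N := by
    intro q
    have hq1 := q.1.isLt
    have hq2 := q.2.isLt
    rcases Nat.eq_zero_or_pos (q.1 : ℕ) with h1 | h1
    · rw [show (((q.1 : ℕ)) : ℤ) = (0 : ℤ) by exact_mod_cast h1, SZ_comm]
      exact stepA q.2 hq2
    · rcases Nat.eq_zero_or_pos (q.2 : ℕ) with h2' | h2'
      · rw [show (((q.2 : ℕ)) : ℤ) = (0 : ℤ) by exact_mod_cast h2']
        exact stepA q.1 hq1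
      · exact stepC _ _ (by omega) (by exact_mod_cast hq1) (by omega) (by exact_mod_cast hq2)
  intro f hf
  have key : (2 : k) • f = ∑ q : Fin p × Fin p, f q • SZ p k q.1 q.2 := by
    funext r
    rw [Finset.sum_apply]
    simp only [Pi.smul_apply, smul_eq_mul, SZ_apply', mul_add, mul_ite, mul_one, mul_zero,
      Finset.sum_add_distrib, Finset.sum_ite_eq', Finset.mem_univ, if_true]
    rw [hf r]
    ring
  have hf2 : f = (2⁻¹ : k) • ((2 : k) • f) := by
    rw [smul_smul, inv_mul_cancel₀ h2, one_smul]
  rw [hf2, key]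
  exact N.smul_mem _ (Submodule.sum_mem N fun q _ => N.smul_mem _ (SZmem q))

lemma mono11_symm (p : ℕ) (k : Type) [Field k] : mono p k 1 1 ∈ symmPart p k := by
  intro q
  simp only [mono]
  exact if_congr and_comm rfl rfl

lemma symmPrime_le_symmPart (p : ℕ) (k : Type) [Field k] :
    symmPrime p k ≤ symmPart p k := by
  rw [symmPrime, Submodule.span_le]
  rintro _ ⟨i, rfl⟩
  intro q
  simp only [Pi.add_apply, mono]
  rw [add_comm]
  congr 1 <;> exact if_congr and_comm rfl rfl

lemma wittOp2_symmPart (p : ℕ) (k : Type) [Field k] (j : ℤ) (f : Fin p × Fin p → k)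
    (hf : f ∈ symmPart p k) : wittOp2 p k j f ∈ symmPart p k := by
  intro q
  show (wittOp2 p k j f) (q.2, q.1) = (wittOp2 p k j f) q
  rw [wittOp2, Matrix.toLin'_apply]
  simp only [Matrix.mulVec, dotProduct, Matrix.of_apply]
  apply Fintype.sum_equiv (Equiv.prodComm (Fin p) (Fin p))
  intro r
  rcases r with ⟨r1, r2⟩
  rcases q with ⟨q1, q2⟩
  simp only [Equiv.prodComm_apply, Prod.swap]
  rw [hf (r1, r2)]
  congr 1
  rw [add_comm]
  congr 1
  · exact if_congr and_comm rfl rfl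
  · exact if_congr and_comm rfl rfl

noncomputable def symmEquiv (p : ℕ) (k : Type) [Field k] :
    (symmPart p k) ≃ₗ[k] ({q : Fin p × Fin p // q.1 ≤ q.2} → k) where
  toFun f := fun s => f.1 s.1
  map_add' f g := rfl
  map_smul' c f := rfl
  invFun g := ⟨fun q => if h : q.1 ≤ q.2 then g ⟨q, h⟩ else g ⟨(q.2, q.1), le_of_not_ge h⟩, by
    intro q
    rcases q with ⟨q1, q2⟩
    dsimp only
    by_cases h : q1 ≤ q2 <;> by_cases h' : q2 ≤ q1
    · have hq : q1 = q2 := le_antisymm h h'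
      subst hq; rfl
    · rw [dif_neg h', dif_pos h]
    · rw [dif_pos h', dif_neg h]
    · exact absurd (le_total q1 q2) (by tauto)⟩
  left_inv f := by
    apply Subtype.ext
    funext q
    rcases q with ⟨q1, q2⟩
    dsimp only
    by_cases h : q1 ≤ q2
    · rw [dif_pos h]
    · rw [dif_neg h]
      exact f.2 (q1, q2)
  right_inv g := by
    funext s
    rcases s with ⟨⟨q1, q2⟩, hs⟩
    dsimp only
    rw [dif_pos hs]

lemma card_le_pairs (p : ℕ) :
    Fintype.card {q : Fin p × Fin p // q.1 ≤ q.2} = p * (p + 1) / 2 := by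
  rw [← Fintype.card_congr (Sym2.sortEquiv (α := Fin p)), Sym2.card, Fintype.card_fin,
    Nat.choose_two_right, Nat.add_sub_cancel, Nat.mul_comm]

lemma finrank_symmPart (p : ℕ) (k : Type) [Field k] :
    Module.finrank k (symmPart p k) = p * (p + 1) / 2 := by
  rw [LinearEquiv.finrank_eq (symmEquiv p k), Module.finrank_pi, card_le_pairs]

lemma prime_indep (p : ℕ) (k : Type) [Field k] (h0 : 0 < p) (h2 : (2 : k) ≠ 0) :
    LinearIndependent k (fun i : Fin p => mono p k i 0 + mono p k 0 i) := by
  haveI : NeZero p := ⟨h0.ne'⟩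
  rw [Fintype.linearIndependent_iff]
  intro g hg i
  have key := congrFun hg (i, 0)
  rw [Finset.sum_apply] at key
  rw [Finset.sum_eq_single i ?_ ?_] at key
  · simp only [Pi.smul_apply, Pi.add_apply, mono, smul_eq_mul, Pi.zero_apply] at key
    by_cases hi : (i : ℕ) = 0
    · simp only [hi, Fin.val_zero, and_self, if_true, eq_self_iff_true] at key
      -- key : g i * (1 + 1) = 0
      have : (1 : k) + 1 = 2 := by norm_num
      rw [this] at key
      exact (mul_eq_zero.mp key).resolve_right h2
    · simp only [Fin.val_zero, hi, eq_self_iff_true, and_true, and_self, if_true,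
        false_and, and_false, if_false] at key
      simpa using key
  · intro b _ hb
    simp only [Pi.smul_apply, Pi.add_apply, mono, smul_eq_mul]
    rw [if_neg, if_neg]
    · ring
    · rintro ⟨h1, hr⟩
      simp only [Fin.val_zero] at h1 hr
      exact hb (Fin.val_injective (by omega))
    · rintro ⟨h1, hr⟩
      simp only [Fin.val_zero] at h1 hr
      exact hb (Fin.val_injective (by omega))
  · intro h
    exact absurd (Finset.mem_univ i) h

lemma finrank_symmPrime (p : ℕ) (k : Type) [Field k] (h0 : 0 < p) (h2 : (2 : k) ≠ 0) :
    Module.finrank k (symmPrime p k) = p := by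
  rw [symmPrime, finrank_span_eq_card (prime_indep p k h0 h2), Fintype.card_fin]

/-- the symmetric top level `A_s⁺ = A_s/A_s'` is a cyclic `W(1)`-module
generated by the class of `v_{2,s} = x₁x₂`: the smallest subspace of `A_{(2)}`
containing `A_s'` and `x₁x₂` and stable under all `e_j` is `A_s` itself (so the image
in the quotient is everything), and `dim A_s⁺ = p(p−1)/2`. -/
theorem symm_top_level_cyclic (p : ℕ) (k : Type) [Field k] [IsAlgClosed k] [CharP k p]
    (hp : p.Prime) (hp3 : 3 < p) :
    sInf {N : Submodule k (Fin p × Fin p → k) |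
        mono p k 1 1 ∈ N ∧ symmPrime p k ≤ N ∧
        ∀ j : ℤ, -1 ≤ j → j ≤ (p : ℤ) - 2 → ∀ f ∈ N, wittOp2 p k j f ∈ N} =
      symmPart p k ∧
    Module.finrank k ↥(Submodule.map (symmPrime p k).mkQ (symmPart p k)) =
      p * (p - 1) / 2 := by
  have h2 : (2 : k) ≠ 0 := by
    intro h
    have hdvd : (p : ℕ) ∣ 2 := (CharP.cast_eq_zero_iff k p 2).mp (by exact_mod_cast h)
    have := Nat.le_of_dvd (by norm_num) hdvd
    omega
  have hle : symmPrime p k ≤ symmPart p k := symmPrime_le_symmPart p k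
  constructor
  · apply le_antisymm
    · exact sInf_le ⟨mono11_symm p k, hle, fun j _ _ f hf => wittOp2_symmPart p k j f hf⟩
    · apply le_sInf
      rintro N ⟨h11, hpr, hst⟩
      exact gen_le p k hp3 h2 N h11 hpr hst
  · obtain ⟨m, hm⟩ := hp.odd_of_ne_two (by omega)
    subst hm
    have h3 := LinearMap.finrank_range_add_finrank_ker
      ((symmPrime (2 * m + 1) k).mkQ.comp (symmPart (2 * m + 1) k).subtype)
    have hr : LinearMap.range ((symmPrime (2 * m + 1) k).mkQ.comp
          (symmPart (2 * m + 1) k).subtype) =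
        Submodule.map (symmPrime (2 * m + 1) k).mkQ (symmPart (2 * m + 1) k) := by
      rw [LinearMap.range_comp, Submodule.range_subtype]
    have hk : LinearMap.ker ((symmPrime (2 * m + 1) k).mkQ.comp
          (symmPart (2 * m + 1) k).subtype) =
        Submodule.comap (symmPart (2 * m + 1) k).subtype (symmPrime (2 * m + 1) k) := by
      rw [LinearMap.ker_comp, Submodule.ker_mkQ]
    have hcoe := Submodule.comapSubtypeEquivOfLe hle
    have hco : Module.finrank k
        (Submodule.comap (symmPart (2 * m + 1) k).subtype (symmPrime (2 * m + 1) k)) =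
        Module.finrank k (symmPrime (2 * m + 1) k) := hcoe.finrank_eq
    rw [hr, hk, hco, finrank_symmPrime (2 * m + 1) k (by omega) h2,
      finrank_symmPart (2 * m + 1) k] at h3
    have e1 : (2 * m + 1) * (2 * m + 1 + 1) / 2 = (2 * m + 1) * m + (2 * m + 1) := by
      rw [show (2 * m + 1) * (2 * m + 1 + 1) = 2 * ((2 * m + 1) * m + (2 * m + 1)) by ring]
      exact Nat.mul_div_cancel_left _ (by norm_num)
    have e2 : (2 * m + 1) * (2 * m + 1 - 1) / 2 = (2 * m + 1) * m := by
      rw [Nat.add_sub_cancel, show (2 * m + 1) * (2 * m) = 2 * ((2 * m + 1) * m) by ring]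
      exact Nat.mul_div_cancel_left _ (by norm_num)
    rw [e1] at h3
    rw [e2]
    exact Nat.add_right_cancel h3
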